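/- Let ω_i = f_{i1} dx + f_{i2} dt (i = 1,2,3) be C¹ one-forms on an open subset of ℝ², and define X = (1/2)[[f_{21}, f_{11}-f_{31}],[f_{11}+f_{31}, -f_{21}]] and T = (1/2)[[f_{22}, f_{12}-f_{32}],[f_{12}+f_{32}, -f_{22}]]. Then the structure equations dω₁ = ω₃∧ω₂, dω₂ = ω₁∧ω₃, dω₃ = ω₁∧ω₂ hold if and only if the zero-curvature equation ∂_t X - ∂_x T + [X,T] = 0 holds. -/

import Mathlib

open Matrix

noncomputable def pdx (f : ℝ → ℝ → ℝ) : ℝ → ℝ → ℝ := fun x t => deriv (fun y => f y t) x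
noncomputable def pdt (f : ℝ → ℝ → ℝ) : ℝ → ℝ → ℝ := fun x t => deriv (fun s => f x s) t

noncomputable def pdxM (X : ℝ → ℝ → Matrix (Fin 2) (Fin 2) ℝ) :
    ℝ → ℝ → Matrix (Fin 2) (Fin 2) ℝ :=
  fun x t => Matrix.of fun i j => deriv (fun y => X y t i j) x

noncomputable def pdtM (X : ℝ → ℝ → Matrix (Fin 2) (Fin 2) ℝ) :
    ℝ → ℝ → Matrix (Fin 2) (Fin 2) ℝ :=
  fun x t => Matrix.of fun i j => deriv (fun s => X x s i j) t


lemma diffAt_t' (f : ℝ → ℝ → ℝ) (hf : ContDiff ℝ 1 (Function.uncurry f)) (x t : ℝ) :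
    DifferentiableAt ℝ (fun s => f x s) t :=
  ((hf.differentiable one_ne_zero) (x, t)).comp t (DifferentiableAt.prodMk (differentiableAt_const x) differentiableAt_id)

lemma diffAt_x' (f : ℝ → ℝ → ℝ) (hf : ContDiff ℝ 1 (Function.uncurry f)) (x t : ℝ) :
    DifferentiableAt ℝ (fun y => f y t) x :=
  by
    have h := ((hf.differentiable one_ne_zero) (x, t)).comp x (by fun_prop : DifferentiableAt ℝ (fun y : ℝ => (y, t)) x)
    exact h

lemma pdtM_entry' (g1 g2 g3 : ℝ → ℝ → ℝ)
    (h1 : ContDiff ℝ 1 (Function.uncurry g1))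
    (h2 : ContDiff ℝ 1 (Function.uncurry g2))
    (h3 : ContDiff ℝ 1 (Function.uncurry g3)) (x t : ℝ) :
    pdtM (fun a b => (1/2 : ℝ) •
        !![g1 a b, g2 a b - g3 a b; g2 a b + g3 a b, -g1 a b]) x t
      = !![(1/2) * pdt g1 x t, (1/2) * (pdt g2 x t - pdt g3 x t);
           (1/2) * (pdt g2 x t + pdt g3 x t), (1/2) * (-pdt g1 x t)] := by
  have d1 := diffAt_t' g1 h1 x t
  have d2 := diffAt_t' g2 h2 x t
  have d3 := diffAt_t' g3 h3 x t
  ext i j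
  fin_cases i <;> fin_cases j <;>
    simp only [pdtM, Matrix.of_apply, Matrix.smul_apply, Matrix.cons_val', Matrix.cons_val_zero,
      Matrix.empty_val', Matrix.cons_val_fin_one, Matrix.cons_val_one, Matrix.head_cons,
      Matrix.head_fin_const, smul_eq_mul, pdt, Fin.mk_zero, Fin.mk_one]
  · exact deriv_const_mul _ d1
  · exact (deriv_const_mul _ (d2.sub d3)).trans (congrArg _ (deriv_sub d2 d3))
  · exact (deriv_const_mul _ (d2.add d3)).trans (congrArg _ (deriv_add d2 d3))
  · exact (deriv_const_mul _ d1.neg).trans (congrArg _ deriv.neg)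

lemma pdxM_entry' (g1 g2 g3 : ℝ → ℝ → ℝ)
    (h1 : ContDiff ℝ 1 (Function.uncurry g1))
    (h2 : ContDiff ℝ 1 (Function.uncurry g2))
    (h3 : ContDiff ℝ 1 (Function.uncurry g3)) (x t : ℝ) :
    pdxM (fun a b => (1/2 : ℝ) •
        !![g1 a b, g2 a b - g3 a b; g2 a b + g3 a b, -g1 a b]) x t
      = !![(1/2) * pdx g1 x t, (1/2) * (pdx g2 x t - pdx g3 x t);
           (1/2) * (pdx g2 x t + pdx g3 x t), (1/2) * (-pdx g1 x t)] := by
  have d1 := diffAt_x' g1 h1 x t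
  have d2 := diffAt_x' g2 h2 x t
  have d3 := diffAt_x' g3 h3 x t
  ext i j
  fin_cases i <;> fin_cases j <;>
    simp only [pdxM, Matrix.of_apply, Matrix.smul_apply, Matrix.cons_val', Matrix.cons_val_zero,
      Matrix.empty_val', Matrix.cons_val_fin_one, Matrix.cons_val_one, Matrix.head_cons,
      Matrix.head_fin_const, smul_eq_mul, pdx, Fin.mk_zero, Fin.mk_one]
  · exact deriv_const_mul _ d1
  · exact (deriv_const_mul _ (d2.sub d3)).trans (congrArg _ (deriv_sub d2 d3))
  · exact (deriv_const_mul _ (d2.add d3)).trans (congrArg _ (deriv_add d2 d3))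
  · exact (deriv_const_mul _ d1.neg).trans (congrArg _ deriv.neg)

/-- Equivalence between the pseudospherical structure equations for the triad
`ωᵢ = f_{i1} dx + f_{i2} dt` and the `sl(2,ℝ)` zero-curvature equation
`∂ₜX - ∂ₓT + [X,T] = 0` for the associated matrices `X, T`. -/
theorem structure_equations_iff_ZCR
    (f11 f12 f21 f22 f31 f32 : ℝ → ℝ → ℝ)
    (h11 : ContDiff ℝ 1 (Function.uncurry f11)) (h12 : ContDiff ℝ 1 (Function.uncurry f12))
    (h21 : ContDiff ℝ 1 (Function.uncurry f21)) (h22 : ContDiff ℝ 1 (Function.uncurry f22))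
    (h31 : ContDiff ℝ 1 (Function.uncurry f31)) (h32 : ContDiff ℝ 1 (Function.uncurry f32)) :
    ((∀ x t : ℝ,
        pdx f12 x t - pdt f11 x t = f31 x t * f22 x t - f32 x t * f21 x t ∧
        pdx f22 x t - pdt f21 x t = f11 x t * f32 x t - f12 x t * f31 x t ∧
        pdx f32 x t - pdt f31 x t = f11 x t * f22 x t - f12 x t * f21 x t)
      ↔
      (∀ x t : ℝ,
        pdtM (fun a b => (1/2 : ℝ) •
            !![f21 a b, f11 a b - f31 a b; f11 a b + f31 a b, -f21 a b]) x t
          - pdxM (fun a b => (1/2 : ℝ) •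
            !![f22 a b, f12 a b - f32 a b; f12 a b + f32 a b, -f22 a b]) x t
          + (((1/2 : ℝ) •
                !![f21 x t, f11 x t - f31 x t; f11 x t + f31 x t, -f21 x t])
              * ((1/2 : ℝ) •
                !![f22 x t, f12 x t - f32 x t; f12 x t + f32 x t, -f22 x t])
            - ((1/2 : ℝ) •
                !![f22 x t, f12 x t - f32 x t; f12 x t + f32 x t, -f22 x t])
              * ((1/2 : ℝ) •
                !![f21 x t, f11 x t - f31 x t; f11 x t + f31 x t, -f21 x t]))
          = 0)) := by
  refine forall_congr' fun x => forall_congr' fun t => ?_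
  rw [pdtM_entry' f21 f11 f31 h21 h11 h31 x t, pdxM_entry' f22 f12 f32 h22 h12 h32 x t,
    ← Matrix.ext_iff]
  simp [Fin.forall_fin_two, Matrix.mul_apply, Fin.sum_univ_two]
  constructor
  · rintro ⟨e1, e2, e3⟩
    refine ⟨⟨by linarith, by linarith⟩, by linarith, by linarith⟩
  · rintro ⟨⟨a00, a01⟩, a10, a11⟩
    refine ⟨by linarith, by linarith, by linarith⟩
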